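/- arXiv:math/0602102 — 5 statements merged into one kernel-verified Lean document; each statement's English description precedes it below -/
import Mathlib

section
/- In a finite groupoid G with subgroupoids H and K such that G = HK and H ∩ K ⊆ G⁰ (the units), every element g of G has a unique decomposition g = hk with h ∈ H, k ∈ K and s(h) = r(k). -/
/-- A (small) groupoid structure on a carrier type `G` of "arrows", with
source map `s`, range map `r`, partial multiplication `mul` (defined when
`s x = r y`) and inversion `inv`.  Units are identified with the elements
`s x`, `r x`. -/
structure Gpd (G : Type*) where
  s : G → G
  r : G → G
  mul : ∀ x y : G, s x = r y → G
  inv : G → G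
  s_mul : ∀ x y h, s (mul x y h) = s y
  r_mul : ∀ x y h, r (mul x y h) = r x
  s_inv : ∀ x, s (inv x) = r x
  r_inv : ∀ x, r (inv x) = s x
  s_s : ∀ x, s (s x) = s x
  r_s : ∀ x, r (s x) = s x
  s_r : ∀ x, s (r x) = r x
  r_r : ∀ x, r (r x) = r x
  mul_source : ∀ x (h : s x = r (s x)), mul x (s x) h = x
  range_mul : ∀ x (h : s (r x) = r x), mul (r x) x h = x
  mul_inv : ∀ x (h : s x = r (inv x)), mul x (inv x) h = r x
  inv_mul : ∀ x (h : s (inv x) = r x), mul (inv x) x h = s x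
  mul_assoc : ∀ x y z (hxy : s x = r y) (hyz : s y = r z)
      (h1 : s (mul x y hxy) = r z) (h2 : s x = r (mul y z hyz)),
      mul (mul x y hxy) z h1 = mul x (mul y z hyz) h2

namespace Gpd

variable {G : Type*} (𝒢 : Gpd G)

/-- The set of units `G⁰` of the groupoid. -/
def units : Set G := {u | 𝒢.r u = u}

/-- A wide subgroupoid: a subset closed under multiplication and inversion and
containing all units. -/
structure IsSubgpd (H : Set G) : Prop where
  mul_mem : ∀ x y (h : 𝒢.s x = 𝒢.r y), x ∈ H → y ∈ H → 𝒢.mul x y h ∈ H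
  inv_mem : ∀ x, x ∈ H → 𝒢.inv x ∈ H
  unit_mem : ∀ u, u ∈ 𝒢.units → u ∈ H

/-- A match pair of subgroupoids `H`, `K` of `G`, together with the projection
maps `p₁ : G → H`, `p₂ : G → K` of the unique factorization `g = p₁ g * p₂ g`. -/
structure MatchPair (H K : Set G) (p₁ p₂ : G → G) : Prop where
  subH : 𝒢.IsSubgpd H
  subK : 𝒢.IsSubgpd K
  inter : H ∩ K ⊆ 𝒢.units
  p₁_mem : ∀ g, p₁ g ∈ H
  p₂_mem : ∀ g, p₂ g ∈ K
  comp : ∀ g, 𝒢.s (p₁ g) = 𝒢.r (p₂ g)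
  decomp : ∀ g, g = 𝒢.mul (p₁ g) (p₂ g) (comp g)
  uniq : ∀ h, h ∈ H → ∀ k, k ∈ K → ∀ hc : 𝒢.s h = 𝒢.r k,
      p₁ (𝒢.mul h k hc) = h ∧ p₂ (𝒢.mul h k hc) = k

theorem MatchPair.s_p₂ {H K : Set G} {p₁ p₂ : G → G}
    (mp : 𝒢.MatchPair H K p₁ p₂) (g : G) : 𝒢.s (p₂ g) = 𝒢.s g := by
  conv_rhs => rw [mp.decomp g]
  rw [𝒢.s_mul]

theorem MatchPair.r_p₁ {H K : Set G} {p₁ p₂ : G → G}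
    (mp : 𝒢.MatchPair H K p₁ p₂) (g : G) : 𝒢.r (p₁ g) = 𝒢.r g := by
  conv_rhs => rw [mp.decomp g]
  rw [𝒢.r_mul]

/-- the left "action" `k ▷ h = p₁ (kh)` -/
def rAct (p₁ : G → G) (k h : G) (hc : 𝒢.s k = 𝒢.r h) : G := p₁ (𝒢.mul k h hc)

/-- the right "action" `k ◁ h = p₂ (kh)` -/
def lAct (p₂ : G → G) (k h : G) (hc : 𝒢.s k = 𝒢.r h) : G := p₂ (𝒢.mul k h hc)

end Gpd

namespace Gpd

variable {G : Type*} (𝒢 : Gpd G)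

open Classical in
/-- totalized multiplication -/
noncomputable def m (x y : G) : G := if h : 𝒢.s x = 𝒢.r y then 𝒢.mul x y h else y

lemma m_eq {x y : G} (h : 𝒢.s x = 𝒢.r y) : 𝒢.m x y = 𝒢.mul x y h := by
  unfold m; rw [dif_pos h]

lemma s_m {x y : G} (h : 𝒢.s x = 𝒢.r y) : 𝒢.s (𝒢.m x y) = 𝒢.s y := by
  rw [𝒢.m_eq h, 𝒢.s_mul]

lemma r_m {x y : G} (h : 𝒢.s x = 𝒢.r y) : 𝒢.r (𝒢.m x y) = 𝒢.r x := by
  rw [𝒢.m_eq h, 𝒢.r_mul]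

lemma m_assoc' {x y z : G} (hxy : 𝒢.s x = 𝒢.r y) (hyz : 𝒢.s y = 𝒢.r z) :
    𝒢.m (𝒢.m x y) z = 𝒢.m x (𝒢.m y z) := by
  rw [𝒢.m_eq hxy, 𝒢.m_eq hyz, 𝒢.m_eq (by rw [𝒢.s_mul]; exact hyz),
      𝒢.m_eq (show 𝒢.s x = 𝒢.r (𝒢.mul y z hyz) by rw [𝒢.r_mul]; exact hxy)]
  exact 𝒢.mul_assoc x y z hxy hyz _ _

lemma m_source (x : G) : 𝒢.m x (𝒢.s x) = x := by
  rw [𝒢.m_eq (by rw [𝒢.r_s])]; exact 𝒢.mul_source x _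

lemma range_m (x : G) : 𝒢.m (𝒢.r x) x = x := by
  rw [𝒢.m_eq (𝒢.s_r x)]; exact 𝒢.range_mul x _

lemma m_inv (x : G) : 𝒢.m x (𝒢.inv x) = 𝒢.r x := by
  rw [𝒢.m_eq (by rw [𝒢.r_inv])]; exact 𝒢.mul_inv x _

lemma inv_m (x : G) : 𝒢.m (𝒢.inv x) x = 𝒢.s x := by
  rw [𝒢.m_eq (𝒢.s_inv x)]; exact 𝒢.inv_mul x _

end Gpd

/-- In a finite groupoid `G` with subgroupoids `H`, `K` such that
`G = HK` and `H ∩ K ⊆ G⁰`, every `g ∈ G` has a unique decomposition `g = hk`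
with `h ∈ H`, `k ∈ K`, `s h = r k`. -/
theorem stmt0 {G : Type*} [Finite G] (𝒢 : Gpd G) (H K : Set G)
    (hH : 𝒢.IsSubgpd H) (hK : 𝒢.IsSubgpd K)
    (hHK : ∀ g : G, ∃ h ∈ H, ∃ k ∈ K, ∃ hc : 𝒢.s h = 𝒢.r k, g = 𝒢.mul h k hc)
    (hint : H ∩ K ⊆ 𝒢.units) (g : G) :
    ∃ h ∈ H, ∃ k ∈ K, ∃ hc : 𝒢.s h = 𝒢.r k, g = 𝒢.mul h k hc ∧
      ∀ h' ∈ H, ∀ k' ∈ K, ∀ hc' : 𝒢.s h' = 𝒢.r k',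
        g = 𝒢.mul h' k' hc' → h' = h ∧ k' = k := by
  obtain ⟨h, hh, k, hk, hc, hg⟩ := hHK g
  refine ⟨h, hh, k, hk, hc, hg, ?_⟩
  intro h' hh' k' hk' hc' hg'
  have heq : 𝒢.m h k = 𝒢.m h' k' := by
    rw [𝒢.m_eq hc, 𝒢.m_eq hc']; exact hg.symm.trans hg'
  have hrh : 𝒢.r h = 𝒢.r h' := by
    have := congrArg 𝒢.r heq
    rwa [𝒢.r_m hc, 𝒢.r_m hc'] at this
  have hsk : 𝒢.s k = 𝒢.s k' := by
    have := congrArg 𝒢.s heq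
    rwa [𝒢.s_m hc, 𝒢.s_m hc'] at this
  have cx : 𝒢.s (𝒢.inv h) = 𝒢.r h' := by rw [𝒢.s_inv]; exact hrh
  set x := 𝒢.m (𝒢.inv h) h' with hxdef
  have hxH : x ∈ H := by
    rw [hxdef, 𝒢.m_eq cx]
    exact hH.mul_mem _ _ _ (hH.inv_mem h hh) hh'
  have sx_x : 𝒢.s x = 𝒢.r k' := by rw [hxdef, 𝒢.s_m cx]; exact hc'
  have eq1 : 𝒢.m (𝒢.inv h) (𝒢.m h k) = k := by
    rw [← 𝒢.m_assoc' (by rw [𝒢.s_inv]) hc, 𝒢.inv_m, hc, 𝒢.range_m]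
  have hkx : k = 𝒢.m x k' := by
    rw [← eq1, heq, hxdef, 𝒢.m_assoc' cx hc']
  have x_val' : 𝒢.r x = 𝒢.s h := by rw [hxdef, 𝒢.r_m cx, 𝒢.r_inv]
  have hxK : x ∈ K := by
    have c2 : 𝒢.s k = 𝒢.r (𝒢.inv k') := by rw [𝒢.r_inv]; exact hsk
    have e3 : 𝒢.m k (𝒢.inv k') = x := by
      rw [hkx, 𝒢.m_assoc' sx_x (by rw [𝒢.r_inv]), 𝒢.m_inv, ← sx_x, 𝒢.m_source]
    rw [← e3, 𝒢.m_eq c2]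
    exact hK.mul_mem _ _ _ hk (hK.inv_mem k' hk')
  have hu : 𝒢.r x = x := hint ⟨hxH, hxK⟩
  have x_val : x = 𝒢.s h := hu.symm.trans x_val'
  have e4 : 𝒢.m h x = h' := by
    rw [hxdef, ← 𝒢.m_assoc' (by rw [𝒢.r_inv]) cx, 𝒢.m_inv, hrh, 𝒢.range_m]
  have e5 : 𝒢.m h x = h := by rw [x_val, 𝒢.m_source]
  have hh'h : h' = h := e4.symm.trans e5
  have hkk' : k = k' := by
    have hsr : 𝒢.s h = 𝒢.r k' := hh'h ▸ hc'
    rw [hkx, x_val, hsr, 𝒢.range_m]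
  exact ⟨hh'h, hkk'.symm⟩
end

section
/- Let (H,K) be a match pair of finite groupoids for G. For every h ∈ H, the cardinality of K^{s(h)} = {k ∈ K : r(k) = s(h)} equals the cardinality of K^{r(h)} = {k ∈ K : r(k) = r(h)}. -/
namespace Gpd

variable {G : Type*} (𝒢 : Gpd G)

theorem mul_congr {x x' y y' : G} (hx : x = x') (hy : y = y')
    (hc : 𝒢.s x = 𝒢.r y) (hc' : 𝒢.s x' = 𝒢.r y') :
    𝒢.mul x y hc = 𝒢.mul x' y' hc' := by subst hx; subst hy; rfl

/-- `x · s x = x` in flexible form: `mul x u = x` when `u = s x`. -/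
theorem mul_src' (x u : G) (hu : u = 𝒢.s x) (hc : 𝒢.s x = 𝒢.r u) :
    𝒢.mul x u hc = x := by
  subst hu; exact 𝒢.mul_source x hc

theorem rng_mul' (x u : G) (hu : u = 𝒢.r x) (hc : 𝒢.s u = 𝒢.r x) :
    𝒢.mul u x hc = x := by
  subst hu; exact 𝒢.range_mul x hc

theorem inv_inv (x : G) : 𝒢.inv (𝒢.inv x) = x := by
  have h1 : 𝒢.s (𝒢.inv (𝒢.inv x)) = 𝒢.r (𝒢.inv x) := 𝒢.s_inv _
  have c1 : 𝒢.s (𝒢.inv x) = 𝒢.r x := 𝒢.s_inv x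
  calc 𝒢.inv (𝒢.inv x)
      = 𝒢.mul (𝒢.inv (𝒢.inv x)) (𝒢.s (𝒢.inv (𝒢.inv x))) (by rw [𝒢.r_s]) :=
        (𝒢.mul_source _ _).symm
    _ = 𝒢.mul (𝒢.inv (𝒢.inv x)) (𝒢.mul (𝒢.inv x) x c1)
          (by rw [𝒢.r_mul, h1]) := by
        refine mul_congr _ rfl ?_ _ _
        rw [𝒢.inv_mul x c1, h1, 𝒢.r_inv]
    _ = 𝒢.mul (𝒢.mul (𝒢.inv (𝒢.inv x)) (𝒢.inv x) (by rw [h1])) x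
          (by rw [𝒢.s_mul, c1]) := (𝒢.mul_assoc _ _ _ _ _ _ _).symm
    _ = 𝒢.mul (𝒢.s (𝒢.inv x)) x (by rw [𝒢.s_s, c1]) :=
        mul_congr 𝒢 (𝒢.inv_mul (𝒢.inv x) (by rw [h1])) rfl _ _
    _ = x := 𝒢.rng_mul' x _ (c1.trans rfl ▸ (𝒢.s_inv x)) _

theorem inv_mul_rev (x y : G) (hc : 𝒢.s x = 𝒢.r y)
    (hc' : 𝒢.s (𝒢.inv y) = 𝒢.r (𝒢.inv x)) :
    𝒢.inv (𝒢.mul x y hc) = 𝒢.mul (𝒢.inv y) (𝒢.inv x) hc' := by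
  have sz : 𝒢.s (𝒢.mul x y hc) = 𝒢.s y := 𝒢.s_mul _ _ _
  have rz : 𝒢.r (𝒢.mul x y hc) = 𝒢.r x := 𝒢.r_mul _ _ _
  have hx : 𝒢.mul (𝒢.mul x y hc) (𝒢.inv y) (by rw [sz, 𝒢.r_inv]) = x := by
    calc 𝒢.mul (𝒢.mul x y hc) (𝒢.inv y) (by rw [sz, 𝒢.r_inv])
        = 𝒢.mul x (𝒢.mul y (𝒢.inv y) (by rw [𝒢.r_inv])) (by rw [𝒢.r_mul, hc]) :=
          𝒢.mul_assoc _ _ _ _ _ _ _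
      _ = 𝒢.mul x (𝒢.r y) (by rw [𝒢.r_r, hc]) :=
          mul_congr 𝒢 rfl (𝒢.mul_inv y _) _ _
      _ = x := 𝒢.mul_src' x _ hc.symm _
  have key : 𝒢.mul (𝒢.inv (𝒢.mul x y hc)) x (by rw [𝒢.s_inv, rz]) = 𝒢.inv y := by
    calc 𝒢.mul (𝒢.inv (𝒢.mul x y hc)) x (by rw [𝒢.s_inv, rz])
        = 𝒢.mul (𝒢.inv (𝒢.mul x y hc))
            (𝒢.mul (𝒢.mul x y hc) (𝒢.inv y) (by rw [sz, 𝒢.r_inv]))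
            (by rw [𝒢.s_inv, 𝒢.r_mul, 𝒢.r_mul, rz]) := mul_congr 𝒢 rfl hx.symm _ _
      _ = 𝒢.mul (𝒢.mul (𝒢.inv (𝒢.mul x y hc)) (𝒢.mul x y hc) (𝒢.s_inv _))
            (𝒢.inv y) (by rw [𝒢.s_mul, sz, 𝒢.r_inv]) :=
          (𝒢.mul_assoc _ _ _ _ _ _ _).symm
      _ = 𝒢.mul (𝒢.s (𝒢.mul x y hc)) (𝒢.inv y) (by rw [𝒢.s_s, sz, 𝒢.r_inv]) :=
          mul_congr 𝒢 (𝒢.inv_mul _ _) rfl _ _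
      _ = 𝒢.inv y := 𝒢.rng_mul' _ _ (by rw [sz, 𝒢.r_inv]) _
  calc 𝒢.inv (𝒢.mul x y hc)
      = 𝒢.mul (𝒢.inv (𝒢.mul x y hc)) (𝒢.s (𝒢.inv (𝒢.mul x y hc))) (by rw [𝒢.r_s]) :=
        (𝒢.mul_source _ _).symm
    _ = 𝒢.mul (𝒢.inv (𝒢.mul x y hc)) (𝒢.mul x (𝒢.inv x) (by rw [𝒢.r_inv]))
          (by rw [𝒢.r_mul, 𝒢.s_inv, rz]) := by
        refine mul_congr _ rfl ?_ _ _
        rw [𝒢.mul_inv x (by rw [𝒢.r_inv]), 𝒢.s_inv, rz]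
    _ = 𝒢.mul (𝒢.mul (𝒢.inv (𝒢.mul x y hc)) x (by rw [𝒢.s_inv, rz])) (𝒢.inv x)
          (by rw [𝒢.s_mul, 𝒢.r_inv]) := (𝒢.mul_assoc _ _ _ _ _ _ _).symm
    _ = 𝒢.mul (𝒢.inv y) (𝒢.inv x) hc' := mul_congr 𝒢 key rfl _ _

section
variable {H K : Set G} {p₁ p₂ : G → G} (mp : 𝒢.MatchPair H K p₁ p₂)
include mp

theorem q₂_mem (g : G) : 𝒢.inv (p₂ (𝒢.inv g)) ∈ K :=
  mp.subK.inv_mem _ (mp.p₂_mem _)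

theorem r_q₂ (g : G) : 𝒢.r (𝒢.inv (p₂ (𝒢.inv g))) = 𝒢.r g := by
  rw [𝒢.r_inv, mp.s_p₂, 𝒢.s_inv]

theorem decompKH (g : G)
    (hc : 𝒢.s (𝒢.inv (p₂ (𝒢.inv g))) = 𝒢.r (𝒢.inv (p₁ (𝒢.inv g)))) :
    g = 𝒢.mul (𝒢.inv (p₂ (𝒢.inv g))) (𝒢.inv (p₁ (𝒢.inv g))) hc := by
  conv_lhs => rw [← 𝒢.inv_inv g]
  calc 𝒢.inv (𝒢.inv g)
      = 𝒢.inv (𝒢.mul (p₁ (𝒢.inv g)) (p₂ (𝒢.inv g)) (mp.comp _)) := by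
        exact congrArg 𝒢.inv (mp.decomp (𝒢.inv g))
    _ = 𝒢.mul (𝒢.inv (p₂ (𝒢.inv g))) (𝒢.inv (p₁ (𝒢.inv g))) hc :=
        𝒢.inv_mul_rev _ _ _ _

theorem KH_uniq (k : G) (hk : k ∈ K) (h' : G) (hh' : h' ∈ H)
    (hc : 𝒢.s k = 𝒢.r h') :
    𝒢.inv (p₂ (𝒢.inv (𝒢.mul k h' hc))) = k := by
  have hrev : 𝒢.inv (𝒢.mul k h' hc)
      = 𝒢.mul (𝒢.inv h') (𝒢.inv k) (by rw [𝒢.s_inv, 𝒢.r_inv, hc]) :=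
    𝒢.inv_mul_rev _ _ _ _
  rw [hrev,
    (mp.uniq (𝒢.inv h') (mp.subH.inv_mem _ hh') (𝒢.inv k) (mp.subK.inv_mem _ hk) _).2,
    𝒢.inv_inv]

theorem cancel (g k : G) (hk : k ∈ K) (hc : 𝒢.s g = 𝒢.r k)
    (hc2 : 𝒢.s (𝒢.inv g) = 𝒢.r (𝒢.inv (p₂ (𝒢.inv (𝒢.mul g k hc))))) :
    𝒢.inv (p₂ (𝒢.inv (𝒢.mul (𝒢.inv g) (𝒢.inv (p₂ (𝒢.inv (𝒢.mul g k hc)))) hc2))) = k := by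
  -- abbreviations
  have sz : 𝒢.s (𝒢.mul g k hc) = 𝒢.s k := 𝒢.s_mul _ _ _
  have rz : 𝒢.r (𝒢.mul g k hc) = 𝒢.r g := 𝒢.r_mul _ _ _
  have hh₁ : 𝒢.inv (p₁ (𝒢.inv (𝒢.mul g k hc))) ∈ H :=
    mp.subH.inv_mem _ (mp.p₁_mem _)
  have c₁ : 𝒢.s (𝒢.inv (p₂ (𝒢.inv (𝒢.mul g k hc))))
      = 𝒢.r (𝒢.inv (p₁ (𝒢.inv (𝒢.mul g k hc)))) := by
    rw [𝒢.s_inv, 𝒢.r_inv, mp.comp]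
  have hdec := 𝒢.decompKH mp (𝒢.mul g k hc) c₁
  -- facts about s/r
  have sk₁ : 𝒢.s (𝒢.inv (p₂ (𝒢.inv (𝒢.mul g k hc)))) = 𝒢.r (p₂ (𝒢.inv (𝒢.mul g k hc))) :=
    𝒢.s_inv _
  have sh₁ : 𝒢.s (𝒢.mul g k hc) = 𝒢.s (𝒢.inv (p₁ (𝒢.inv (𝒢.mul g k hc)))) := by
    conv_lhs => rw [hdec]
    rw [𝒢.s_mul]
  -- Step A : k₁ = z · h₁⁻¹
  have stepA : 𝒢.inv (p₂ (𝒢.inv (𝒢.mul g k hc)))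
      = 𝒢.mul (𝒢.mul g k hc) (𝒢.inv (𝒢.inv (p₁ (𝒢.inv (𝒢.mul g k hc)))))
          (by rw [𝒢.r_inv, sh₁]) := by
    calc 𝒢.inv (p₂ (𝒢.inv (𝒢.mul g k hc)))
        = 𝒢.mul (𝒢.inv (p₂ (𝒢.inv (𝒢.mul g k hc))))
            (𝒢.s (𝒢.inv (p₂ (𝒢.inv (𝒢.mul g k hc))))) (by rw [𝒢.r_s]) :=
          (𝒢.mul_source _ _).symm
      _ = 𝒢.mul (𝒢.inv (p₂ (𝒢.inv (𝒢.mul g k hc))))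
            (𝒢.mul (𝒢.inv (p₁ (𝒢.inv (𝒢.mul g k hc))))
              (𝒢.inv (𝒢.inv (p₁ (𝒢.inv (𝒢.mul g k hc))))) (by rw [𝒢.r_inv]))
            (by rw [𝒢.r_mul, c₁]) := by
          refine mul_congr _ rfl ?_ _ _
          rw [𝒢.mul_inv _ (by rw [𝒢.r_inv])]
          exact c₁
      _ = 𝒢.mul (𝒢.mul (𝒢.inv (p₂ (𝒢.inv (𝒢.mul g k hc))))
              (𝒢.inv (p₁ (𝒢.inv (𝒢.mul g k hc)))) c₁)
            (𝒢.inv (𝒢.inv (p₁ (𝒢.inv (𝒢.mul g k hc)))))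
            (by rw [𝒢.s_mul, 𝒢.r_inv, 𝒢.s_inv]) := (𝒢.mul_assoc _ _ _ _ _ _ _).symm
      _ = 𝒢.mul (𝒢.mul g k hc) (𝒢.inv (𝒢.inv (p₁ (𝒢.inv (𝒢.mul g k hc)))))
            (by rw [𝒢.r_inv, sh₁]) := mul_congr 𝒢 hdec.symm rfl _ _
  -- Step B : g⁻¹ · k₁ = k · h₁⁻¹
  have stepB : 𝒢.mul (𝒢.inv g) (𝒢.inv (p₂ (𝒢.inv (𝒢.mul g k hc)))) hc2
      = 𝒢.mul k (𝒢.inv (𝒢.inv (p₁ (𝒢.inv (𝒢.mul g k hc)))))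
          (by rw [𝒢.r_inv, ← sh₁, sz]) := by
    calc 𝒢.mul (𝒢.inv g) (𝒢.inv (p₂ (𝒢.inv (𝒢.mul g k hc)))) hc2
        = 𝒢.mul (𝒢.inv g)
            (𝒢.mul (𝒢.mul g k hc) (𝒢.inv (𝒢.inv (p₁ (𝒢.inv (𝒢.mul g k hc)))))
              (by rw [𝒢.r_inv, sh₁]))
            (by rw [𝒢.s_inv, 𝒢.r_mul, 𝒢.r_mul]) := mul_congr 𝒢 rfl stepA _ _
      _ = 𝒢.mul (𝒢.mul (𝒢.inv g) (𝒢.mul g k hc) (by rw [𝒢.s_inv, rz]))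
            (𝒢.inv (𝒢.inv (p₁ (𝒢.inv (𝒢.mul g k hc)))))
            (by rw [𝒢.s_mul, 𝒢.r_inv, ← sh₁, sz]) := (𝒢.mul_assoc _ _ _ _ _ _ _).symm
      _ = 𝒢.mul k (𝒢.inv (𝒢.inv (p₁ (𝒢.inv (𝒢.mul g k hc)))))
            (by rw [𝒢.r_inv, ← sh₁, sz]) := by
          refine mul_congr _ ?_ rfl _ _
          calc 𝒢.mul (𝒢.inv g) (𝒢.mul g k hc) (by rw [𝒢.s_inv, rz])
              = 𝒢.mul (𝒢.mul (𝒢.inv g) g (𝒢.s_inv g)) k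
                  (by rw [𝒢.s_mul, hc]) := (𝒢.mul_assoc _ _ _ _ _ _ _).symm
            _ = 𝒢.mul (𝒢.s g) k (by rw [𝒢.s_s, hc]) :=
                  mul_congr 𝒢 (𝒢.inv_mul g (𝒢.s_inv g)) rfl _ _
            _ = k := 𝒢.rng_mul' _ _ hc _
  rw [congrArg (fun x => 𝒢.inv (p₂ (𝒢.inv x))) stepB]
  exact 𝒢.KH_uniq mp k hk _ (mp.subH.inv_mem _ hh₁) _

end


end Gpd

/-- For a match pair `(H,K)` of finite groupoids and `h ∈ H`,
`Card (K^{s h}) = Card (K^{r h})`. -/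
theorem stmt2 {G : Type*} [Finite G] (𝒢 : Gpd G) (H K : Set G) (p₁ p₂ : G → G)
    (mp : 𝒢.MatchPair H K p₁ p₂) (h : G) (hh : h ∈ H) :
    Set.ncard {k | k ∈ K ∧ 𝒢.r k = 𝒢.s h} = Set.ncard {k | k ∈ K ∧ 𝒢.r k = 𝒢.r h} := by
  rw [← Nat.card_coe_set_eq, ← Nat.card_coe_set_eq]
  refine Nat.card_congr ?_
  refine
    { toFun := fun k =>
        ⟨𝒢.inv (p₂ (𝒢.inv (𝒢.mul h k.1 (k.2.2.symm ▸ rfl)))),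
          ⟨𝒢.q₂_mem mp _, by rw [𝒢.r_q₂ mp, 𝒢.r_mul]⟩⟩
      invFun := fun k =>
        ⟨𝒢.inv (p₂ (𝒢.inv (𝒢.mul (𝒢.inv h) k.1 (by rw [𝒢.s_inv, k.2.2])))),
          ⟨𝒢.q₂_mem mp _, by rw [𝒢.r_q₂ mp, 𝒢.r_mul, 𝒢.r_inv]⟩⟩
      left_inv := fun k => ?_
      right_inv := fun k => ?_ }
  · exact Subtype.ext (𝒢.cancel mp h k.1 k.2.1 _ _)
  · refine Subtype.ext ?_
    calc 𝒢.inv (p₂ (𝒢.inv (𝒢.mul h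
            (𝒢.inv (p₂ (𝒢.inv (𝒢.mul (𝒢.inv h) k.1 (by rw [𝒢.s_inv, k.2.2])))))
            (by rw [𝒢.r_q₂ mp, 𝒢.r_mul, 𝒢.r_inv]))))
        = 𝒢.inv (p₂ (𝒢.inv (𝒢.mul (𝒢.inv (𝒢.inv h))
            (𝒢.inv (p₂ (𝒢.inv (𝒢.mul (𝒢.inv h) k.1 (by rw [𝒢.s_inv, k.2.2])))))
            (by rw [𝒢.s_inv, 𝒢.r_inv, 𝒢.r_q₂ mp, 𝒢.r_mul, 𝒢.r_inv])))) :=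
          congrArg (fun x => 𝒢.inv (p₂ (𝒢.inv x)))
            (Gpd.mul_congr 𝒢 (𝒢.inv_inv h).symm rfl _ _)
      _ = k.1 := 𝒢.cancel mp (𝒢.inv h) k.1 k.2.1 _ _
end

section
/- Let G be a finite groupoid and I_G the operator on ℓ²(G×G) defined by (I_G ξ)(x,y) = ξ(xy,y) if s(x) = r(y), 0 otherwise. Then I_G satisfies the pentagonal relation (I_G)₁₂(I_G)₁₃(I_G)₂₃ = (I_G)₂₃(I_G)₁₂ as operators on ℓ²(G×G×G). -/
namespace Gpd

noncomputable section
attribute [local instance] Classical.propDecidable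

variable {G : Type*} (𝒢 : Gpd G)

/-- The leg `(I_G)₁₂` of `I_G` on `ℓ²(G × G × G)`. -/
def IG12 : ((G × G × G) → ℂ) → ((G × G × G) → ℂ) := fun ξ p =>
  if hc : 𝒢.s p.1 = 𝒢.r p.2.1 then ξ (𝒢.mul p.1 p.2.1 hc, p.2.1, p.2.2) else 0

/-- The leg `(I_G)₂₃` of `I_G` on `ℓ²(G × G × G)`. -/
def IG23 : ((G × G × G) → ℂ) → ((G × G × G) → ℂ) := fun ξ p =>
  if hc : 𝒢.s p.2.1 = 𝒢.r p.2.2 then ξ (p.1, 𝒢.mul p.2.1 p.2.2 hc, p.2.2) else 0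

/-- The leg `(I_G)₁₃` of `I_G` on `ℓ²(G × G × G)`. -/
def IG13 : ((G × G × G) → ℂ) → ((G × G × G) → ℂ) := fun ξ p =>
  if hc : 𝒢.s p.1 = 𝒢.r p.2.2 then ξ (𝒢.mul p.1 p.2.2 hc, p.2.1, p.2.2) else 0

/-- `I_G` satisfies the pentagonal relation
`(I_G)₁₂ (I_G)₁₃ (I_G)₂₃ = (I_G)₂₃ (I_G)₁₂` on `ℓ²(G × G × G)`. -/
theorem stmt13 [Fintype G] :
    ∀ ξ : (G × G × G) → ℂ, 𝒢.IG12 (𝒢.IG13 (𝒢.IG23 ξ)) = 𝒢.IG23 (𝒢.IG12 ξ) := by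
  intro ξ
  funext p
  obtain ⟨x, y, z⟩ := p
  simp only [IG12, IG13, IG23]
  by_cases hxy : 𝒢.s x = 𝒢.r y
  · rw [dif_pos hxy]
    by_cases hyz : 𝒢.s y = 𝒢.r z
    · have h1 : 𝒢.s (𝒢.mul x y hxy) = 𝒢.r z := by rw [𝒢.s_mul]; exact hyz
      have h2 : 𝒢.s x = 𝒢.r (𝒢.mul y z hyz) := by rw [𝒢.r_mul]; exact hxy
      rw [dif_pos h1, dif_pos hyz, dif_pos hyz, dif_pos h2]
      rw [𝒢.mul_assoc x y z hxy hyz h1 h2]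
    · have h1 : ¬ 𝒢.s (𝒢.mul x y hxy) = 𝒢.r z := by rw [𝒢.s_mul]; exact hyz
      rw [dif_neg hyz, dif_neg h1]
  · by_cases hyz : 𝒢.s y = 𝒢.r z
    · have h2 : ¬ 𝒢.s x = 𝒢.r (𝒢.mul y z hyz) := by rw [𝒢.r_mul]; exact hxy
      rw [dif_neg hxy, dif_pos hyz, dif_neg h2]
    · rw [dif_neg hxy, dif_neg hyz]

end

end Gpd
end

section
/- Let (H,K) be a match pair of finite groupoids for G with projections p₁ : G → H, p₂ : G → K and middle map m. Define I on ℓ²(G×G) by (Iξ)(x,y) = ξ(x·p₁(p₂(x)⁻¹y), p₂(x)⁻¹y) if m(x) = r(y) and 0 otherwise. Then I*I is the orthogonal projection onto {ξ : ξ(x,y) = 0 unless s(x) = m(y)} and II* is the orthogonal projection onto {ξ : ξ(x,y) = 0 unless m(x) = r(y)}; in particular I is a partial isometry. -/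
namespace Gpd

noncomputable section
attribute [local instance] Classical.propDecidable

variable {G : Type*} (𝒢 : Gpd G) {H K : Set G} {p₁ p₂ : G → G}

/-- The multiplicative partial isometry of a match pair:
`(Iξ)(x,y) = ξ(x·p₁(p₂(x)⁻¹y), p₂(x)⁻¹y)` if `m x = r y`, `0` otherwise. -/
def IMP (mp : 𝒢.MatchPair H K p₁ p₂) : ((G × G) → ℂ) → ((G × G) → ℂ) :=
  fun ξ p =>
    if hm : 𝒢.s (p₁ p.1) = 𝒢.r p.2 then
      have h1 : 𝒢.s (𝒢.inv (p₂ p.1)) = 𝒢.r p.2 := by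
        rw [𝒢.s_inv, ← mp.comp p.1]; exact hm
      have h2 : 𝒢.s p.1 = 𝒢.r (p₁ (𝒢.mul (𝒢.inv (p₂ p.1)) p.2 h1)) := by
        rw [mp.r_p₁, 𝒢.r_mul, 𝒢.r_inv, mp.s_p₂]
      ξ (𝒢.mul p.1 (p₁ (𝒢.mul (𝒢.inv (p₂ p.1)) p.2 h1)) h2,
        𝒢.mul (𝒢.inv (p₂ p.1)) p.2 h1)
    else 0

/-- The adjoint: `(I*ξ)(x,y) = ξ(x·p₁(y)⁻¹, p₂(x·p₁(y)⁻¹)·y)` if `s x = m y`,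
`0` otherwise. -/
def IMPstar (mp : 𝒢.MatchPair H K p₁ p₂) : ((G × G) → ℂ) → ((G × G) → ℂ) :=
  fun ξ p =>
    if hm : 𝒢.s p.1 = 𝒢.s (p₁ p.2) then
      have hA : 𝒢.s p.1 = 𝒢.r (𝒢.inv (p₁ p.2)) := by rw [𝒢.r_inv]; exact hm
      have hB : 𝒢.s (p₂ (𝒢.mul p.1 (𝒢.inv (p₁ p.2)) hA)) = 𝒢.r p.2 := by
        rw [mp.s_p₂, 𝒢.s_mul, 𝒢.s_inv, mp.r_p₁]
      ξ (𝒢.mul p.1 (𝒢.inv (p₁ p.2)) hA,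
        𝒢.mul (p₂ (𝒢.mul p.1 (𝒢.inv (p₁ p.2)) hA)) p.2 hB)
    else 0

theorem aux_mul_congr {a a' b b' : G} (ha : a = a') (hb : b = b')
    (h : 𝒢.s a = 𝒢.r b) (h' : 𝒢.s a' = 𝒢.r b') :
    𝒢.mul a b h = 𝒢.mul a' b' h' := by subst ha; subst hb; rfl

/-- `(a·b)·b⁻¹ = a` -/
theorem aux_mul_inv_cancel (a b : G) (h : 𝒢.s a = 𝒢.r b)
    (h' : 𝒢.s (𝒢.mul a b h) = 𝒢.r (𝒢.inv b)) :
    𝒢.mul (𝒢.mul a b h) (𝒢.inv b) h' = a := by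
  rw [𝒢.mul_assoc a b (𝒢.inv b) h (by rw [𝒢.r_inv]) h'
    (by rw [𝒢.r_mul]; exact h)]
  exact (𝒢.aux_mul_congr rfl ((𝒢.mul_inv b (by rw [𝒢.r_inv])).trans h.symm) _
    (𝒢.r_s a).symm).trans (𝒢.mul_source a (𝒢.r_s a).symm)

/-- `(a·b⁻¹)·b = a` -/
theorem aux_mul_inv_cancel' (a b : G) (h : 𝒢.s a = 𝒢.r (𝒢.inv b))
    (h' : 𝒢.s (𝒢.mul a (𝒢.inv b) h) = 𝒢.r b) :
    𝒢.mul (𝒢.mul a (𝒢.inv b) h) b h' = a := by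
  have hsb : 𝒢.s a = 𝒢.s b := h.trans (𝒢.r_inv b)
  rw [𝒢.mul_assoc a (𝒢.inv b) b h (𝒢.s_inv b) h' (by rw [𝒢.r_mul]; exact h)]
  exact (𝒢.aux_mul_congr rfl ((𝒢.inv_mul b (𝒢.s_inv b)).trans hsb.symm) _
    (𝒢.r_s a).symm).trans (𝒢.mul_source a (𝒢.r_s a).symm)

/-- `a·(a⁻¹·c) = c` -/
theorem aux_mul_inv_mul (a c : G) (h : 𝒢.s (𝒢.inv a) = 𝒢.r c)
    (h' : 𝒢.s a = 𝒢.r (𝒢.mul (𝒢.inv a) c h)) :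
    𝒢.mul a (𝒢.mul (𝒢.inv a) c h) h' = c := by
  have hrc : 𝒢.r a = 𝒢.r c := by rw [← 𝒢.s_inv]; exact h
  rw [← 𝒢.mul_assoc a (𝒢.inv a) c (by rw [𝒢.r_inv]) h
    (by rw [𝒢.s_mul]; exact h) h']
  exact (𝒢.aux_mul_congr ((𝒢.mul_inv a (by rw [𝒢.r_inv])).trans hrc) rfl _
    (𝒢.s_r c)).trans (𝒢.range_mul c (𝒢.s_r c))

/-- `a⁻¹·(a·c) = c` -/
theorem aux_inv_mul_mul (a c : G) (h : 𝒢.s a = 𝒢.r c)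
    (h' : 𝒢.s (𝒢.inv a) = 𝒢.r (𝒢.mul a c h)) :
    𝒢.mul (𝒢.inv a) (𝒢.mul a c h) h' = c := by
  rw [← 𝒢.mul_assoc (𝒢.inv a) a c (𝒢.s_inv a) h
    (by rw [𝒢.s_mul]; exact h) h']
  exact (𝒢.aux_mul_congr ((𝒢.inv_mul a (𝒢.s_inv a)).trans h) rfl _
    (𝒢.s_r c)).trans (𝒢.range_mul c (𝒢.s_r c))

/-- The underlying point map of `IMP`. -/
def Phi (mp : 𝒢.MatchPair H K p₁ p₂) : G × G → G × G := fun p =>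
  if hm : 𝒢.s (p₁ p.1) = 𝒢.r p.2 then
    have h1 : 𝒢.s (𝒢.inv (p₂ p.1)) = 𝒢.r p.2 := by
      rw [𝒢.s_inv, ← mp.comp p.1]; exact hm
    have h2 : 𝒢.s p.1 = 𝒢.r (p₁ (𝒢.mul (𝒢.inv (p₂ p.1)) p.2 h1)) := by
      rw [mp.r_p₁, 𝒢.r_mul, 𝒢.r_inv, mp.s_p₂]
    (𝒢.mul p.1 (p₁ (𝒢.mul (𝒢.inv (p₂ p.1)) p.2 h1)) h2,
      𝒢.mul (𝒢.inv (p₂ p.1)) p.2 h1)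
  else p

/-- The underlying point map of `IMPstar`. -/
def Psi (mp : 𝒢.MatchPair H K p₁ p₂) : G × G → G × G := fun p =>
  if hm : 𝒢.s p.1 = 𝒢.s (p₁ p.2) then
    have hA : 𝒢.s p.1 = 𝒢.r (𝒢.inv (p₁ p.2)) := by rw [𝒢.r_inv]; exact hm
    have hB : 𝒢.s (p₂ (𝒢.mul p.1 (𝒢.inv (p₁ p.2)) hA)) = 𝒢.r p.2 := by
      rw [mp.s_p₂, 𝒢.s_mul, 𝒢.s_inv, mp.r_p₁]
    (𝒢.mul p.1 (𝒢.inv (p₁ p.2)) hA,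
      𝒢.mul (p₂ (𝒢.mul p.1 (𝒢.inv (p₁ p.2)) hA)) p.2 hB)
  else p

theorem IMP_apply (mp : 𝒢.MatchPair H K p₁ p₂) (ξ : (G × G) → ℂ) (p : G × G)
    (hm : 𝒢.s (p₁ p.1) = 𝒢.r p.2) : 𝒢.IMP mp ξ p = ξ (𝒢.Phi mp p) := by
  simp only [IMP, Phi, dif_pos hm]

theorem IMP_apply_zero (mp : 𝒢.MatchPair H K p₁ p₂) (ξ : (G × G) → ℂ)
    (p : G × G) (hm : ¬ 𝒢.s (p₁ p.1) = 𝒢.r p.2) : 𝒢.IMP mp ξ p = 0 := by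
  simp only [IMP, dif_neg hm]

theorem IMPstar_apply (mp : 𝒢.MatchPair H K p₁ p₂) (ξ : (G × G) → ℂ)
    (p : G × G) (hm : 𝒢.s p.1 = 𝒢.s (p₁ p.2)) :
    𝒢.IMPstar mp ξ p = ξ (𝒢.Psi mp p) := by
  simp only [IMPstar, Psi, dif_pos hm]

theorem IMPstar_apply_zero (mp : 𝒢.MatchPair H K p₁ p₂) (ξ : (G × G) → ℂ)
    (p : G × G) (hm : ¬ 𝒢.s p.1 = 𝒢.s (p₁ p.2)) : 𝒢.IMPstar mp ξ p = 0 := by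
  simp only [IMPstar, dif_neg hm]

theorem cond_Phi (mp : 𝒢.MatchPair H K p₁ p₂) (p : G × G)
    (hm : 𝒢.s (p₁ p.1) = 𝒢.r p.2) :
    𝒢.s (𝒢.Phi mp p).1 = 𝒢.s (p₁ (𝒢.Phi mp p).2) := by
  simp only [Phi, dif_pos hm]
  rw [𝒢.s_mul]

theorem cond_Psi (mp : 𝒢.MatchPair H K p₁ p₂) (p : G × G)
    (hm : 𝒢.s p.1 = 𝒢.s (p₁ p.2)) :
    𝒢.s (p₁ (𝒢.Psi mp p).1) = 𝒢.r (𝒢.Psi mp p).2 := by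
  simp only [Psi, dif_pos hm]
  rw [𝒢.r_mul]; exact mp.comp _

theorem Psi_Phi (mp : 𝒢.MatchPair H K p₁ p₂) (p : G × G)
    (hm : 𝒢.s (p₁ p.1) = 𝒢.r p.2) : 𝒢.Psi mp (𝒢.Phi mp p) = p := by
  have hc := 𝒢.cond_Phi mp p hm
  obtain ⟨x, y⟩ := p
  simp only [Phi, dif_pos hm] at hc ⊢
  simp only [Psi, dif_pos hc]
  have h1 : 𝒢.s (𝒢.inv (p₂ x)) = 𝒢.r y := by
    rw [𝒢.s_inv, ← mp.comp x]; exact hm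
  have h2 : 𝒢.s x = 𝒢.r (p₁ (𝒢.mul (𝒢.inv (p₂ x)) y h1)) := by
    rw [mp.r_p₁, 𝒢.r_mul, 𝒢.r_inv, mp.s_p₂]
  have hA : 𝒢.s (𝒢.mul x (p₁ (𝒢.mul (𝒢.inv (p₂ x)) y h1)) h2)
      = 𝒢.r (𝒢.inv (p₁ (𝒢.mul (𝒢.inv (p₂ x)) y h1))) := by
    rw [𝒢.s_mul, 𝒢.r_inv]
  have hx : 𝒢.mul (𝒢.mul x (p₁ (𝒢.mul (𝒢.inv (p₂ x)) y h1)) h2)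
      (𝒢.inv (p₁ (𝒢.mul (𝒢.inv (p₂ x)) y h1))) hA = x :=
    𝒢.aux_mul_inv_cancel _ _ h2 hA
  refine Prod.ext hx ?_
  have hB' : 𝒢.s (p₂ x) = 𝒢.r (𝒢.mul (𝒢.inv (p₂ x)) y h1) := by
    rw [𝒢.r_mul, 𝒢.r_inv, mp.s_p₂]
  exact (𝒢.aux_mul_congr (congrArg p₂ hx) rfl _ hB').trans
    (𝒢.aux_mul_inv_mul (p₂ x) y h1 hB')

theorem Phi_Psi (mp : 𝒢.MatchPair H K p₁ p₂) (p : G × G)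
    (hm : 𝒢.s p.1 = 𝒢.s (p₁ p.2)) : 𝒢.Phi mp (𝒢.Psi mp p) = p := by
  have hc := 𝒢.cond_Psi mp p hm
  obtain ⟨x, y⟩ := p
  simp only [Psi, dif_pos hm] at hc ⊢
  simp only [Phi, dif_pos hc]
  have hA : 𝒢.s x = 𝒢.r (𝒢.inv (p₁ y)) := by
    rw [𝒢.r_inv]; exact hm
  have hB : 𝒢.s (p₂ (𝒢.mul x (𝒢.inv (p₁ y)) hA)) = 𝒢.r y := by
    rw [mp.s_p₂, 𝒢.s_mul, 𝒢.s_inv, mp.r_p₁]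
  have h1 : 𝒢.s (𝒢.inv (p₂ (𝒢.mul x (𝒢.inv (p₁ y)) hA)))
      = 𝒢.r (𝒢.mul (p₂ (𝒢.mul x (𝒢.inv (p₁ y)) hA)) y hB) := by
    rw [𝒢.s_inv, 𝒢.r_mul]
  have hy : 𝒢.mul (𝒢.inv (p₂ (𝒢.mul x (𝒢.inv (p₁ y)) hA)))
      (𝒢.mul (p₂ (𝒢.mul x (𝒢.inv (p₁ y)) hA)) y hB) h1 = y :=
    𝒢.aux_inv_mul_mul _ y hB h1
  refine Prod.ext ?_ hy
  have hsx : 𝒢.s (𝒢.mul x (𝒢.inv (p₁ y)) hA) = 𝒢.r (p₁ y) := by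
    rw [𝒢.s_mul, 𝒢.s_inv]
  exact (𝒢.aux_mul_congr rfl (congrArg p₁ hy) _ hsx).trans
    (𝒢.aux_mul_inv_cancel' x (p₁ y) hA hsx)

/-- `I*` is the adjoint of `I`; `I*I` is the orthogonal
projection onto `{ξ : ξ(x,y) = 0 unless s x = m y}`, `II*` is the orthogonal
projection onto `{ξ : ξ(x,y) = 0 unless m x = r y}`; in particular `I` is a
partial isometry (`II*I = I`). -/
theorem stmt14 [Fintype G] (mp : 𝒢.MatchPair H K p₁ p₂) :
    (∀ ξ η : (G × G) → ℂ,
      ∑ p : G × G, (starRingEnd ℂ) (𝒢.IMP mp ξ p) * η p =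
        ∑ p : G × G, (starRingEnd ℂ) (ξ p) * 𝒢.IMPstar mp η p) ∧
    (∀ (ξ : (G × G) → ℂ) (p : G × G),
      𝒢.IMPstar mp (𝒢.IMP mp ξ) p =
        if 𝒢.s p.1 = 𝒢.s (p₁ p.2) then ξ p else 0) ∧
    (∀ ξ : (G × G) → ℂ,
      (𝒢.IMPstar mp (𝒢.IMP mp ξ) = ξ ↔
        ∀ p : G × G, ¬ 𝒢.s p.1 = 𝒢.s (p₁ p.2) → ξ p = 0)) ∧
    (∀ (ξ : (G × G) → ℂ) (p : G × G),
      𝒢.IMP mp (𝒢.IMPstar mp ξ) p =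
        if 𝒢.s (p₁ p.1) = 𝒢.r p.2 then ξ p else 0) ∧
    (∀ ξ : (G × G) → ℂ,
      (𝒢.IMP mp (𝒢.IMPstar mp ξ) = ξ ↔
        ∀ p : G × G, ¬ 𝒢.s (p₁ p.1) = 𝒢.r p.2 → ξ p = 0)) ∧
    (∀ ξ : (G × G) → ℂ, 𝒢.IMP mp (𝒢.IMPstar mp (𝒢.IMP mp ξ)) = 𝒢.IMP mp ξ) := by
  have key2 : ∀ (ξ : (G × G) → ℂ) (p : G × G),
      𝒢.IMPstar mp (𝒢.IMP mp ξ) p =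
        if 𝒢.s p.1 = 𝒢.s (p₁ p.2) then ξ p else 0 := by
    intro ξ p
    by_cases h : 𝒢.s p.1 = 𝒢.s (p₁ p.2)
    · rw [if_pos h, 𝒢.IMPstar_apply mp _ p h,
        𝒢.IMP_apply mp ξ _ (𝒢.cond_Psi mp p h), 𝒢.Phi_Psi mp p h]
    · rw [if_neg h, 𝒢.IMPstar_apply_zero mp _ p h]
  have key4 : ∀ (ξ : (G × G) → ℂ) (p : G × G),
      𝒢.IMP mp (𝒢.IMPstar mp ξ) p =
        if 𝒢.s (p₁ p.1) = 𝒢.r p.2 then ξ p else 0 := by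
    intro ξ p
    by_cases h : 𝒢.s (p₁ p.1) = 𝒢.r p.2
    · rw [if_pos h, 𝒢.IMP_apply mp _ p h,
        𝒢.IMPstar_apply mp ξ _ (𝒢.cond_Phi mp p h), 𝒢.Psi_Phi mp p h]
    · rw [if_neg h, 𝒢.IMP_apply_zero mp _ p h]
  refine ⟨?_, key2, ?_, key4, ?_, ?_⟩
  · intro ξ η
    have L : ∑ p : G × G, (starRingEnd ℂ) (𝒢.IMP mp ξ p) * η p =
        ∑ p ∈ Finset.univ.filter
          (fun p : G × G => 𝒢.s (p₁ p.1) = 𝒢.r p.2),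
          (starRingEnd ℂ) (ξ (𝒢.Phi mp p)) * η p := by
      rw [Finset.sum_filter]
      refine Finset.sum_congr rfl fun p _ => ?_
      by_cases h : 𝒢.s (p₁ p.1) = 𝒢.r p.2
      · rw [if_pos h, 𝒢.IMP_apply mp ξ p h]
      · rw [if_neg h, 𝒢.IMP_apply_zero mp ξ p h, map_zero, zero_mul]
    have R : ∑ p : G × G, (starRingEnd ℂ) (ξ p) * 𝒢.IMPstar mp η p =
        ∑ p ∈ Finset.univ.filter
          (fun p : G × G => 𝒢.s p.1 = 𝒢.s (p₁ p.2)),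
          (starRingEnd ℂ) (ξ p) * η (𝒢.Psi mp p) := by
      rw [Finset.sum_filter]
      refine Finset.sum_congr rfl fun p _ => ?_
      by_cases h : 𝒢.s p.1 = 𝒢.s (p₁ p.2)
      · rw [if_pos h, 𝒢.IMPstar_apply mp η p h]
      · rw [if_neg h, 𝒢.IMPstar_apply_zero mp η p h, mul_zero]
    rw [L, R]
    refine Finset.sum_nbij' (𝒢.Phi mp) (𝒢.Psi mp) ?_ ?_ ?_ ?_ ?_
    · intro p hp
      simp only [Finset.mem_filter, Finset.mem_univ, true_and] at hp ⊢
      exact 𝒢.cond_Phi mp p hp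
    · intro p hp
      simp only [Finset.mem_filter, Finset.mem_univ, true_and] at hp ⊢
      exact 𝒢.cond_Psi mp p hp
    · intro p hp
      simp only [Finset.mem_filter, Finset.mem_univ, true_and] at hp
      exact 𝒢.Psi_Phi mp p hp
    · intro p hp
      simp only [Finset.mem_filter, Finset.mem_univ, true_and] at hp
      exact 𝒢.Phi_Psi mp p hp
    · intro p hp
      simp only [Finset.mem_filter, Finset.mem_univ, true_and] at hp
      rw [𝒢.Psi_Phi mp p hp]
  · intro ξ
    constructor
    · intro h p hp
      rw [← h, key2, if_neg hp]
    · intro h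
      funext p
      rw [key2]
      by_cases hp : 𝒢.s p.1 = 𝒢.s (p₁ p.2)
      · rw [if_pos hp]
      · rw [if_neg hp, h p hp]
  · intro ξ
    constructor
    · intro h p hp
      rw [← h, key4, if_neg hp]
    · intro h
      funext p
      rw [key4]
      by_cases hp : 𝒢.s (p₁ p.1) = 𝒢.r p.2
      · rw [if_pos hp]
      · rw [if_neg hp, h p hp]
  · intro ξ
    funext p
    rw [key4]
    by_cases hp : 𝒢.s (p₁ p.1) = 𝒢.r p.2
    · rw [if_pos hp]
    · rw [if_neg hp, 𝒢.IMP_apply_zero mp ξ p hp]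

end

end Gpd
end

section
/- Let a finite groupoid G act on a direct sum von Neumann algebra A = ⊕_{u∈G⁰} A_u via isomorphisms α_g : A_{s(g)} → A_{r(g)} with α_{gg'} = α_g ∘ α_{g'} for composable g, g'. An element x = Σ_{h∈G} δ(x^h)(1 ⊗ ρ(h)) of the crossed product (with x^h ∈ A_{r(h)}), where each A_u is a factor, commutes with δ(A) if and only if for every h with s(h) ≠ r(h) one has x^h = 0, and for every h with s(h) = r(h) and x^h ≠ 0, x^h is invertible and α_h(a) = (x^h)⁻¹ a x^h for all a ∈ A_{r(h)}. -/
private lemma castApp {G : Type*} {A : G → Type*} {u v : G} (e : u = v) (a : ∀ w, A w) :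
    cast (congrArg A e) (a u) = a v := by subst e; rfl

theorem stmt16' {G : Type*} [Finite G] (𝒢 : Gpd G)
    (A : G → Type*) [∀ u, Ring (A u)] [∀ u, Algebra ℂ (A u)]
    (hsimple : ∀ u : G, IsSimpleOrder (TwoSidedIdeal (A u)))
    (x : ∀ h : G, A (𝒢.r h))
    (α : ∀ g : G, A (𝒢.s g) ≃+* A (𝒢.r g)) :
    (∀ (a : ∀ u : G, A u) (h : G),
        a (𝒢.r h) * x h = x h * α h (a (𝒢.s h))) ↔
    ((∀ h : G, 𝒢.s h ≠ 𝒢.r h → x h = 0) ∧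
      ∀ (h : G) (hiso : 𝒢.s h = 𝒢.r h), x h ≠ 0 →
        IsUnit (x h) ∧
          ∀ a : A (𝒢.r h),
            α h (cast (congrArg A hiso.symm) a) = Ring.inverse (x h) * a * x h) := by
  classical
  constructor
  · intro H
    have key : ∀ (h : G) (hiso : 𝒢.s h = 𝒢.r h) (b : A (𝒢.r h)),
        b * x h = x h * α h (cast (congrArg A hiso.symm) b) := by
      intro h hiso b
      have := H (fun u => if e : u = 𝒢.r h then cast (congrArg A e.symm) b else 0) h
      simpa [dif_pos hiso] using this
    constructor
    · intro h hne
      have := H (fun u => if e : u = 𝒢.r h then cast (congrArg A e.symm) (1 : A (𝒢.r h)) else 0) h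
      simpa [dif_neg hne] using this
    · intro h hiso hx
      -- φ is the automorphism b ↦ α h (cast b)
      set φ : A (𝒢.r h) → A (𝒢.r h) := fun b => α h (cast (congrArg A hiso.symm) b) with hφ
      have hkey : ∀ b, b * x h = x h * φ b := key h hiso
      have hφsurj : Function.Surjective φ := by
        intro c
        exact ⟨cast (congrArg A hiso) ((α h).symm c), by
          simp [hφ, cast_cast]⟩
      -- right ideal x·A is two-sided
      have Sright : ∀ c : A (𝒢.r h), ∀ y, (x h * y) * c = x h * (y * c) := fun c y => mul_assoc _ _ _
      let S : TwoSidedIdeal (A (𝒢.r h)) := TwoSidedIdeal.mk' {c | ∃ y, c = x h * y}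
        ⟨0, by rw [mul_zero]⟩
        (fun {c d} hc hd => by
          obtain ⟨y, rfl⟩ := hc; obtain ⟨z, rfl⟩ := hd; exact ⟨y + z, by rw [mul_add]⟩)
        (fun {c} hc => by obtain ⟨y, rfl⟩ := hc; exact ⟨-y, by rw [mul_neg]⟩)
        (fun {a c} hc => by
          obtain ⟨y, rfl⟩ := hc
          exact ⟨φ a * y, by rw [← mul_assoc, hkey a, mul_assoc]⟩)
        (fun {c a} hc => by obtain ⟨y, rfl⟩ := hc; exact ⟨y * a, by rw [mul_assoc]⟩)
      have hSne : S ≠ ⊥ := by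
        intro hS
        have : x h ∈ S := by simp only [S, TwoSidedIdeal.mem_mk']; exact ⟨1, (mul_one _).symm⟩
        rw [hS, TwoSidedIdeal.mem_bot] at this
        exact hx this
      have hStop : S = ⊤ := ((hsimple _).eq_bot_or_eq_top S).resolve_left hSne
      have h1S : (1 : A (𝒢.r h)) ∈ S := by rw [hStop]; exact TwoSidedIdeal.mem_top _
      obtain ⟨y, hy⟩ : ∃ y, (1 : A (𝒢.r h)) = x h * y := by
        simpa only [S, TwoSidedIdeal.mem_mk', Set.mem_setOf_eq] using h1S
      -- left ideal A·x is two-sided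
      let T : TwoSidedIdeal (A (𝒢.r h)) := TwoSidedIdeal.mk' {c | ∃ y, c = y * x h}
        ⟨0, by rw [zero_mul]⟩
        (fun {c d} hc hd => by
          obtain ⟨y, rfl⟩ := hc; obtain ⟨z, rfl⟩ := hd; exact ⟨y + z, by rw [add_mul]⟩)
        (fun {c} hc => by obtain ⟨y, rfl⟩ := hc; exact ⟨-y, by rw [neg_mul]⟩)
        (fun {a c} hc => by obtain ⟨y, rfl⟩ := hc; exact ⟨a * y, by rw [mul_assoc]⟩)
        (fun {c a} hc => by
          obtain ⟨y, rfl⟩ := hc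
          obtain ⟨b, hb⟩ := hφsurj a
          exact ⟨y * b, by rw [mul_assoc, mul_assoc, ← hb, ← hkey]⟩)
      have hTne : T ≠ ⊥ := by
        intro hT
        have : x h ∈ T := by simp only [T, TwoSidedIdeal.mem_mk']; exact ⟨1, (one_mul _).symm⟩
        rw [hT, TwoSidedIdeal.mem_bot] at this
        exact hx this
      have hTtop : T = ⊤ := ((hsimple _).eq_bot_or_eq_top T).resolve_left hTne
      have h1T : (1 : A (𝒢.r h)) ∈ T := by rw [hTtop]; exact TwoSidedIdeal.mem_top _
      obtain ⟨z, hz⟩ : ∃ z, (1 : A (𝒢.r h)) = z * x h := by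
        simpa only [T, TwoSidedIdeal.mem_mk', Set.mem_setOf_eq] using h1T
      have hyx : y * x h = 1 := by
        calc y * x h = (z * x h) * (y * x h) := by rw [← hz, one_mul]
        _ = z * (x h * y) * x h := by noncomm_ring
        _ = 1 := by rw [← hy, mul_one, ← hz]
      have hu : IsUnit (x h) := ⟨⟨x h, y, hy.symm, hyx⟩, rfl⟩
      refine ⟨hu, fun a => ?_⟩
      have h1 : φ a = Ring.inverse (x h) * (a * x h) := by
        rw [hkey a, ← mul_assoc, Ring.inverse_mul_cancel _ hu, one_mul]
      rw [mul_assoc]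
      exact h1
  · rintro ⟨h0, hinv⟩ a h
    by_cases hiso : 𝒢.s h = 𝒢.r h
    · have ha : cast (congrArg A hiso.symm) (a (𝒢.r h)) = a (𝒢.s h) := castApp hiso.symm a
      by_cases hx : x h = 0
      · rw [hx, mul_zero, zero_mul]
      · obtain ⟨hu, hf⟩ := hinv h hiso hx
        rw [← ha, hf]
        rw [← mul_assoc, ← mul_assoc, Ring.mul_inverse_cancel _ hu, one_mul]
    · rw [h0 h hiso, mul_zero, zero_mul]


/-- characterization of the elements of the crossed product
`A ⋊ C(G)` commuting with `δ(A)`, for an action `α` of a finite groupoid `G`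
on `A = ⊕_u A_u` with each `A_u` a factor.  An element
`x = Σ_h δ(x^h)(1 ⊗ ρ(h))` commutes with `δ(A)` (equivalently, by the
multiplication rule of the crossed product, `a_{r h} · x^h = x^h · α_h(a_{s h})`
for all `a` and `h`) iff `x^h = 0` for every non-isotropic `h`, and for every
isotropic `h` with `x^h ≠ 0`, `x^h` is invertible and
`α_h(a) = (x^h)⁻¹ a x^h` on `A_{r h}`. -/
theorem stmt16 {G : Type*} [Finite G] (𝒢 : Gpd G)
    (A : G → Type*) [∀ u, Ring (A u)] [∀ u, Algebra ℂ (A u)]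
    -- each `A_u` is a factor: trivial center ...
    (hcenter : ∀ (u : G) (z : A u), (∀ a : A u, z * a = a * z) →
      ∃ c : ℂ, z = algebraMap ℂ (A u) c)
    -- ... and no nontrivial (weakly closed) two-sided ideals
    (hsimple : ∀ u : G, IsSimpleOrder (TwoSidedIdeal (A u)))
    -- the action of the groupoid: isomorphisms `α_g : A_{s g} ≃ A_{r g}` ...
    (α : ∀ g : G, A (𝒢.s g) ≃+* A (𝒢.r g))
    -- ... which are functorial: `α_{g g'} = α_g ∘ α_{g'}`
    (hα : ∀ (g g' : G) (hc : 𝒢.s g = 𝒢.r g') (a : A (𝒢.s g')),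
      α (𝒢.mul g g' hc) (cast (congrArg A (𝒢.s_mul g g' hc)).symm a) =
        cast (congrArg A (𝒢.r_mul g g' hc)).symm
          (α g (cast (congrArg A hc.symm) (α g' a))))
    -- the coefficients `x^h ∈ A_{r h}` of an element of the crossed product
    (x : ∀ h : G, A (𝒢.r h)) :
    -- commutation with `δ(A)` ...
    (∀ (a : ∀ u : G, A u) (h : G),
        a (𝒢.r h) * x h = x h * α h (a (𝒢.s h))) ↔
    -- ... iff the coefficients vanish outside the isotropy and implement `α`
    ((∀ h : G, 𝒢.s h ≠ 𝒢.r h → x h = 0) ∧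
      ∀ (h : G) (hiso : 𝒢.s h = 𝒢.r h), x h ≠ 0 →
        IsUnit (x h) ∧
          ∀ a : A (𝒢.r h),
            α h (cast (congrArg A hiso.symm) a) = Ring.inverse (x h) * a * x h) :=
  stmt16' 𝒢 A hsimple x α
end
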